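/- arXiv:2110.09611 — 2 statements merged into one kernel-verified Lean document; each statement's English description precedes it below -/
import Mathlib

section
/- The triple cross product X(u,v,w) = -u(v̄w) + ⟨u,v⟩w + ⟨v,w⟩u - ⟨w,u⟩v on 𝕆 satisfies the axioms of a 3-fold cross product: ⟨X(u,v,w), u⟩ = ⟨X(u,v,w), v⟩ = ⟨X(u,v,w), w⟩ = 0, and ‖X(u,v,w)‖² = det(⟨u_i, u_j⟩) where (u_1,u_2,u_3)=(u,v,w), for all u,v,w ∈ 𝕆. -/
open scoped RealInnerProductSpace

noncomputable section

abbrev Oct : Type := EuclideanSpace ℝ (Fin 8)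

def octe (i : Fin 8) : Oct := EuclideanSpace.single i 1

def plusTriples : List (Fin 8 × Fin 8 × Fin 8) :=
  [(1,2,3),(1,4,5),(1,7,6),(2,4,6),(2,5,7),(3,4,7),(3,6,5)]

/-- Completely skew-symmetric structure tensor taking the value `+1` on the
triples 123, 145, 176, 246, 257, 347, 365. -/
def eps (i j k : Fin 8) : ℝ :=
  if plusTriples.any (fun t => decide ((i,j,k) = t ∨ (i,j,k) = (t.2.1, t.2.2, t.1) ∨
      (i,j,k) = (t.2.2, t.1, t.2.1))) then 1
  else if plusTriples.any (fun t => decide ((i,j,k) = (t.1, t.2.2, t.2.1) ∨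
      (i,j,k) = (t.2.2, t.2.1, t.1) ∨ (i,j,k) = (t.2.1, t.1, t.2.2))) then -1
  else 0

/-- Structure constants of octonion multiplication:
`e_0 e_i = e_i e_0 = e_i` and `e_i e_j = -δ_ij e_0 + ε_ijk e_k` for `i,j ≥ 1`. -/
def structC (i j k : Fin 8) : ℝ :=
  if i = 0 then (if j = k then 1 else 0)
  else if j = 0 then (if i = k then 1 else 0)
  else (if i = j ∧ k = 0 then (-1:ℝ) else 0) + eps i j k

/-- Octonion multiplication on ℝ⁸. -/
def octMul (x y : Oct) : Oct := WithLp.toLp 2 (fun k => ∑ i, ∑ j, x i * y j * structC i j k)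

/-- Octonionic conjugation. -/
def octConj (x : Oct) : Oct := WithLp.toLp 2 (fun k => if k = 0 then x 0 else -(x k))

/-- The triple cross product `X(u,v,w) = -u(v̄w) + ⟨u,v⟩w + ⟨v,w⟩u - ⟨w,u⟩v`. -/
def X3 (u v w : Oct) : Oct :=
  -octMul u (octMul (octConj v) w) + ⟪u, v⟫ • w + ⟪v, w⟫ • u - ⟪w, u⟫ • v

/-- The double cross product `u × v = uv + ⟨u,v⟩ e_0` (on imaginary octonions). -/
def cross2 (u v : Oct) : Oct := octMul u v + ⟪u, v⟫ • octe 0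


theorem inner_oct (x y : Oct) : ⟪x, y⟫ = x 0 * y 0 + x 1 * y 1 + x 2 * y 2 + x 3 * y 3
    + x 4 * y 4 + x 5 * y 5 + x 6 * y 6 + x 7 * y 7 := by
  simp [PiLp.inner_apply, RCLike.inner_apply, conj_trivial, Fin.sum_univ_eight]
  ring

theorem octMul_c0 (x y : Oct) : octMul x y 0 = x 0 * y 0 - x 1 * y 1 - x 2 * y 2 - x 3 * y 3 - x 4 * y 4 - x 5 * y 5 - x 6 * y 6 - x 7 * y 7 := by
  simp only [octMul, Fin.sum_univ_eight]
  simp (config := { decide := true }) [structC, eps, plusTriples]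
  ring

theorem octMul_c1 (x y : Oct) : octMul x y 1 = x 0 * y 1 + x 1 * y 0 + x 2 * y 3 - x 3 * y 2 + x 4 * y 5 - x 5 * y 4 - x 6 * y 7 + x 7 * y 6 := by
  simp only [octMul, Fin.sum_univ_eight]
  simp (config := { decide := true }) [structC, eps, plusTriples]
  ring

theorem octMul_c2 (x y : Oct) : octMul x y 2 = x 0 * y 2 - x 1 * y 3 + x 2 * y 0 + x 3 * y 1 + x 4 * y 6 + x 5 * y 7 - x 6 * y 4 - x 7 * y 5 := by
  simp only [octMul, Fin.sum_univ_eight]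
  simp (config := { decide := true }) [structC, eps, plusTriples]
  ring

theorem octMul_c3 (x y : Oct) : octMul x y 3 = x 0 * y 3 + x 1 * y 2 - x 2 * y 1 + x 3 * y 0 + x 4 * y 7 - x 5 * y 6 + x 6 * y 5 - x 7 * y 4 := by
  simp only [octMul, Fin.sum_univ_eight]
  simp (config := { decide := true }) [structC, eps, plusTriples]
  ring

theorem octMul_c4 (x y : Oct) : octMul x y 4 = x 0 * y 4 - x 1 * y 5 - x 2 * y 6 - x 3 * y 7 + x 4 * y 0 + x 5 * y 1 + x 6 * y 2 + x 7 * y 3 := by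
  simp only [octMul, Fin.sum_univ_eight]
  simp (config := { decide := true }) [structC, eps, plusTriples]
  ring

theorem octMul_c5 (x y : Oct) : octMul x y 5 = x 0 * y 5 + x 1 * y 4 - x 2 * y 7 + x 3 * y 6 - x 4 * y 1 + x 5 * y 0 - x 6 * y 3 + x 7 * y 2 := by
  simp only [octMul, Fin.sum_univ_eight]
  simp (config := { decide := true }) [structC, eps, plusTriples]
  ring

theorem octMul_c6 (x y : Oct) : octMul x y 6 = x 0 * y 6 + x 1 * y 7 + x 2 * y 4 - x 3 * y 5 - x 4 * y 2 + x 5 * y 3 + x 6 * y 0 - x 7 * y 1 := by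
  simp only [octMul, Fin.sum_univ_eight]
  simp (config := { decide := true }) [structC, eps, plusTriples]
  ring

theorem octMul_c7 (x y : Oct) : octMul x y 7 = x 0 * y 7 - x 1 * y 6 + x 2 * y 5 + x 3 * y 4 - x 4 * y 3 - x 5 * y 2 + x 6 * y 1 + x 7 * y 0 := by
  simp only [octMul, Fin.sum_univ_eight]
  simp (config := { decide := true }) [structC, eps, plusTriples]
  ring

theorem octConj_c0 (x : Oct) : octConj x 0 = x 0 := by
  simp (config := { decide := true }) [octConj]

theorem octConj_c1 (x : Oct) : octConj x 1 = -x 1 := by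
  simp (config := { decide := true }) [octConj]

theorem octConj_c2 (x : Oct) : octConj x 2 = -x 2 := by
  simp (config := { decide := true }) [octConj]

theorem octConj_c3 (x : Oct) : octConj x 3 = -x 3 := by
  simp (config := { decide := true }) [octConj]

theorem octConj_c4 (x : Oct) : octConj x 4 = -x 4 := by
  simp (config := { decide := true }) [octConj]

theorem octConj_c5 (x : Oct) : octConj x 5 = -x 5 := by
  simp (config := { decide := true }) [octConj]

theorem octConj_c6 (x : Oct) : octConj x 6 = -x 6 := by
  simp (config := { decide := true }) [octConj]

theorem octConj_c7 (x : Oct) : octConj x 7 = -x 7 := by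
  simp (config := { decide := true }) [octConj]

theorem compMul (x y : Oct) : ⟪octMul x y, octMul x y⟫ = ⟪x, x⟫ * ⟪y, y⟫ := by
  simp only [inner_oct, octMul_c0, octMul_c1, octMul_c2, octMul_c3, octMul_c4, octMul_c5,
    octMul_c6, octMul_c7]
  ring

theorem conjInner (x : Oct) : ⟪octConj x, octConj x⟫ = ⟪x, x⟫ := by
  simp only [inner_oct, octConj_c0, octConj_c1, octConj_c2, octConj_c3, octConj_c4, octConj_c5,
    octConj_c6, octConj_c7]
  ring

theorem innerA_w (u v w : Oct) :
    ⟪w, octMul u (octMul (octConj v) w)⟫ = ⟪u, v⟫ * ⟪w, w⟫ := by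
  simp only [inner_oct, octMul_c0, octMul_c1, octMul_c2, octMul_c3, octMul_c4, octMul_c5,
    octMul_c6, octMul_c7, octConj_c0, octConj_c1, octConj_c2, octConj_c3, octConj_c4, octConj_c5,
    octConj_c6, octConj_c7]
  ring

theorem innerA_u (u v w : Oct) :
    ⟪u, octMul u (octMul (octConj v) w)⟫ = ⟪v, w⟫ * ⟪u, u⟫ := by
  simp only [inner_oct, octMul_c0, octMul_c1, octMul_c2, octMul_c3, octMul_c4, octMul_c5,
    octMul_c6, octMul_c7, octConj_c0, octConj_c1, octConj_c2, octConj_c3, octConj_c4, octConj_c5,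
    octConj_c6, octConj_c7]
  ring

theorem innerA_v (u v w : Oct) :
    ⟪v, octMul u (octMul (octConj v) w)⟫ = 2 * ⟪u, v⟫ * ⟪v, w⟫ - ⟪w, u⟫ * ⟪v, v⟫ := by
  simp only [inner_oct, octMul_c0, octMul_c1, octMul_c2, octMul_c3, octMul_c4, octMul_c5,
    octMul_c6, octMul_c7, octConj_c0, octConj_c1, octConj_c2, octConj_c3, octConj_c4, octConj_c5,
    octConj_c6, octConj_c7]
  ring

theorem innerA_w' (u v w : Oct) :
    ⟪octMul u (octMul (octConj v) w), w⟫ = ⟪u, v⟫ * ⟪w, w⟫ := by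
  rw [real_inner_comm]; exact innerA_w u v w

theorem innerA_u' (u v w : Oct) :
    ⟪octMul u (octMul (octConj v) w), u⟫ = ⟪v, w⟫ * ⟪u, u⟫ := by
  rw [real_inner_comm]; exact innerA_u u v w

theorem innerA_v' (u v w : Oct) :
    ⟪octMul u (octMul (octConj v) w), v⟫ = 2 * ⟪u, v⟫ * ⟪v, w⟫ - ⟪w, u⟫ * ⟪v, v⟫ := by
  rw [real_inner_comm]; exact innerA_v u v w

theorem innerA_A (u v w : Oct) :
    ⟪octMul u (octMul (octConj v) w), octMul u (octMul (octConj v) w)⟫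
      = ⟪u, u⟫ * (⟪v, v⟫ * ⟪w, w⟫) := by
  rw [compMul, compMul, conjInner]

/-- The triple cross product on 𝕆 satisfies the axioms of a 3-fold cross
product: orthogonality to each argument and norm given by the Gram
determinant. -/
theorem stmt5 (u v w : Oct) :
    ⟪X3 u v w, u⟫ = 0 ∧ ⟪X3 u v w, v⟫ = 0 ∧ ⟪X3 u v w, w⟫ = 0 ∧
    ‖X3 u v w‖ ^ 2 =
      Matrix.det !![⟪u, u⟫, ⟪u, v⟫, ⟪u, w⟫;
                    ⟪v, u⟫, ⟪v, v⟫, ⟪v, w⟫;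
                    ⟪w, u⟫, ⟪w, v⟫, ⟪w, w⟫] := by
  have hXu : ⟪X3 u v w, u⟫ = 0 := by
    simp only [X3, inner_add_left, inner_sub_left, inner_neg_left, real_inner_smul_left,
      innerA_u']
    simp only [real_inner_comm v u, real_inner_comm w u, real_inner_comm w v]
    ring
  have hXv : ⟪X3 u v w, v⟫ = 0 := by
    simp only [X3, inner_add_left, inner_sub_left, inner_neg_left, real_inner_smul_left,
      innerA_v']
    simp only [real_inner_comm v u, real_inner_comm w u, real_inner_comm w v]
    ring
  have hXw : ⟪X3 u v w, w⟫ = 0 := by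
    simp only [X3, inner_add_left, inner_sub_left, inner_neg_left, real_inner_smul_left,
      innerA_w']
    simp only [real_inner_comm v u, real_inner_comm w u, real_inner_comm w v]
    ring
  refine ⟨hXu, hXv, hXw, ?_⟩
  rw [← real_inner_self_eq_norm_sq]
  simp only [X3, inner_add_left, inner_sub_left, inner_neg_left, real_inner_smul_left,
    inner_add_right, inner_sub_right, inner_neg_right, real_inner_smul_right,
    innerA_A, innerA_w, innerA_u, innerA_v, innerA_w', innerA_u', innerA_v']
  rw [Matrix.det_fin_three]
  simp only [Matrix.of_apply, Matrix.cons_val', Matrix.cons_val_zero, Matrix.cons_val_one,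
    Matrix.head_cons, Matrix.empty_val', Matrix.cons_val_fin_one, Matrix.head_fin_const,
    Matrix.cons_val_two, Matrix.tail_cons]
  simp only [real_inner_comm v u, real_inner_comm w u, real_inner_comm w v]
  ring
end
end

section
/- With notation as in the computation of second covariant derivatives of σ₃ along coordinate geodesics of G(3,8): for ℓ ∈ {0,1,2} and j ∈ {3,...,7}, the second covariant derivative ∇_{e_j^ℓ}∇_{E_j^ℓ}σ₃ at e_0∧e_1∧e_2 equals (δ_{j3} - 1) e_3. Consequently the rough Laplacian satisfies Δσ₃(e_0∧e_1∧e_2) = -12 e_3 = -12 σ₃(e_0∧e_1∧e_2). -/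
open scoped RealInnerProductSpace

noncomputable section

def l0 (l : Fin 3) : Fin 8 := Fin.castLE (by norm_num) l
def l1 (l : Fin 3) : Fin 8 := Fin.castLE (by norm_num) (l + 1)
def l2 (l : Fin 3) : Fin 8 := Fin.castLE (by norm_num) (l + 2)

/-- Orthogonal projection of ℝ⁸ onto `(span{e₀,e₁,e₂})^⊥`. -/
def proj012 (x : Oct) : Oct :=
  x - x 0 • octe 0 - x 1 • octe 1 - x 2 • octe 2

/-- `σ₃` evaluated along the surface `P_{t,s} = exp(t e_j^ℓ) γ_j^ℓ(s)
= γ_j^ℓ(t+s)` of `G(3,8)` (indices mod 3). -/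
def F15 (l : Fin 3) (j : Fin 8) (t s : ℝ) : Oct :=
  X3 (Real.cos (t + s) • octe (l0 l) + Real.sin (t + s) • octe j)
    (octe (l1 l)) (octe (l2 l))

def S1 (l : Fin 3) (j : Fin 8) : Oct := deriv (fun s => F15 l j 0 s) 0

def S2 (l : Fin 3) (j : Fin 8) : Oct :=
  deriv (fun t => deriv (fun s => F15 l j t s) 0) 0

/-- The second covariant derivative `∇_{e_j^ℓ}∇_{E_j^ℓ}σ₃` at
`e₀∧e₁∧e₂`, computed as `π₀(π₀' S₁ + S₂)` where
`π₀' = -(e_j ⊗ e^ℓ + e_ℓ ⊗ e^j)` is the derivative of the family of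
normal projections along the geodesic. -/
def covD2 (l : Fin 3) (j : Fin 8) : Oct :=
  proj012 ((-(S1 l j (l0 l))) • octe j - S1 l j j • octe (l0 l) + S2 l j)

lemma octMul_addl (x y z : Oct) : octMul (x + y) z = octMul x z + octMul y z := by
  ext k
  simp [octMul, add_mul, Finset.sum_add_distrib]

lemma octMul_smull (a : ℝ) (x z : Oct) : octMul (a • x) z = a • octMul x z := by
  ext k
  simp [octMul, Finset.mul_sum, mul_assoc]

lemma X3_lin (a b : ℝ) (u u' v w : Oct) :
    X3 (a • u + b • u') v w = a • X3 u v w + b • X3 u' v w := by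
  unfold X3
  rw [octMul_addl, octMul_smull, octMul_smull, inner_add_left, inner_add_right,
    real_inner_smul_left, real_inner_smul_left, real_inner_smul_right, real_inner_smul_right]
  module

lemma F15_eq (l : Fin 3) (j : Fin 8) (t s : ℝ) :
    F15 l j t s = Real.cos (t + s) • X3 (octe (l0 l)) (octe (l1 l)) (octe (l2 l))
      + Real.sin (t + s) • X3 (octe j) (octe (l1 l)) (octe (l2 l)) := by
  rw [F15, X3_lin]

def Avec (l : Fin 3) : Oct := X3 (octe (l0 l)) (octe (l1 l)) (octe (l2 l))
def Bvec (l : Fin 3) (j : Fin 8) : Oct := X3 (octe j) (octe (l1 l)) (octe (l2 l))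

lemma derivS (l : Fin 3) (j : Fin 8) (t : ℝ) :
    deriv (fun s => F15 l j t s) 0 = (-Real.sin t) • Avec l + Real.cos t • Bvec l j := by
  have hc : HasDerivAt (fun s : ℝ => Real.cos (t + s)) (-Real.sin (t + 0)) 0 := by
    exact (Real.hasDerivAt_cos (t + 0)).comp_const_add t 0
  have hs : HasDerivAt (fun s : ℝ => Real.sin (t + s)) (Real.cos (t + 0)) 0 := by
    exact (Real.hasDerivAt_sin (t + 0)).comp_const_add t 0
  have h : HasDerivAt (fun s => F15 l j t s)
      ((-Real.sin (t + 0)) • Avec l + Real.cos (t + 0) • Bvec l j) 0 := by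
    have := (hc.smul_const (Avec l)).add (hs.smul_const (Bvec l j))
    refine HasDerivAt.congr_of_eventuallyEq this ?_
    filter_upwards with s
    rw [F15_eq]; rfl
  simpa using h.deriv

lemma S1_eq (l : Fin 3) (j : Fin 8) : S1 l j = Bvec l j := by
  rw [S1, derivS]; simp

lemma S2_eq (l : Fin 3) (j : Fin 8) : S2 l j = -Avec l := by
  rw [S2]
  have : (fun t => deriv (fun s => F15 l j t s) 0)
      = fun t => (-Real.sin t) • Avec l + Real.cos t • Bvec l j := by
    funext t; rw [derivS]
  rw [this]
  have h : HasDerivAt (fun t : ℝ => (-Real.sin t) • Avec l + Real.cos t • Bvec l j)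
      ((-Real.cos 0) • Avec l + (-Real.sin 0) • Bvec l j) 0 := by
    exact (((Real.hasDerivAt_sin 0).neg.smul_const (Avec l)).add
      ((Real.hasDerivAt_cos 0).smul_const (Bvec l j)))
  rw [h.deriv]; simp

lemma covD2_eq (l : Fin 3) (j : Fin 8) :
    covD2 l j = proj012 ((-(Bvec l j (l0 l))) • octe j - Bvec l j j • octe (l0 l) - Avec l) := by
  rw [covD2, S1_eq, S2_eq]
  congr 1

lemma inner_octe (a b : Fin 8) : ⟪octe a, octe b⟫ = if a = b then (1:ℝ) else 0 := by
  simp [octe, PiLp.inner_apply, EuclideanSpace.single_apply, Finset.sum_ite_eq,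
    Finset.sum_ite_eq', eq_comm]

lemma octMul_octe_left (a : Fin 8) (y : Oct) :
    octMul (octe a) y = WithLp.toLp 2 (fun k => ∑ j, y j * structC a j k) := by
  ext k
  rw [octMul, PiLp.toLp_apply, PiLp.toLp_apply, Finset.sum_comm]
  simp [octe, EuclideanSpace.single_apply, ite_mul, Finset.sum_ite_eq, Finset.sum_ite_eq']

lemma octMul_octe_octe (a b : Fin 8) :
    octMul (octe a) (octe b) = WithLp.toLp 2 (fun k => structC a b k) := by
  rw [octMul_octe_left]
  ext k
  simp [octe, EuclideanSpace.single_apply, ite_mul, Finset.sum_ite_eq, Finset.sum_ite_eq']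

lemma octConj_octe_nz (b : Fin 8) (hb : b ≠ 0) : octConj (octe b) = -octe b := by
  ext k
  by_cases hk : k = 0 <;>
    simp [octConj, octe, EuclideanSpace.single_apply, hk, hb, Ne.symm hb]

lemma octMul_neg_right (x y : Oct) : octMul x (-y) = -octMul x y := by
  ext k
  simp [octMul, mul_neg, neg_mul, Finset.sum_neg_distrib]

lemma X3_octe (a b c : Fin 8) (hb : b ≠ 0) (hbc : b ≠ c) (hca : c ≠ a) (hab : a ≠ b) :
    X3 (octe a) (octe b) (octe c) = WithLp.toLp 2 (fun k => ∑ j, structC b c j * structC a j k) := by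
  rw [X3, octConj_octe_nz b hb]
  rw [show octMul (-octe b) (octe c) = -octMul (octe b) (octe c) by
    ext k; simp [octMul, neg_mul, Finset.sum_neg_distrib]]
  rw [octMul_octe_octe, octMul_neg_right, octMul_octe_left,
    inner_octe, inner_octe, inner_octe]
  simp [hbc, hca, hab]

lemma X3_octe0 (a c : Fin 8) (hc : c ≠ 0) (hca : c ≠ a) (ha : a ≠ 0) :
    X3 (octe a) (octe 0) (octe c) = WithLp.toLp 2 (fun k => -∑ j, structC 0 c j * structC a j k) := by
  rw [X3, show octConj (octe 0) = octe 0 by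
    ext k; by_cases hk : k = 0 <;> simp [octConj, octe, EuclideanSpace.single_apply, hk]]
  rw [octMul_octe_octe, octMul_octe_left, inner_octe, inner_octe, inner_octe]
  simp [hc.symm, hca, ha, Ne.symm ha]
  rfl

lemma l0_0 : l0 0 = 0 := rfl
lemma l0_1 : l0 1 = 1 := rfl
lemma l0_2 : l0 2 = 2 := rfl
lemma l1_0 : l1 0 = 1 := rfl
lemma l1_1 : l1 1 = 2 := rfl
lemma l1_2 : l1 2 = 0 := rfl
lemma l2_0 : l2 0 = 2 := rfl
lemma l2_1 : l2 1 = 0 := rfl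
lemma l2_2 : l2 2 = 1 := rfl

lemma AvecEq0 : Avec 0 = octe 3 := by
  rw [Avec, l0_0, l1_0, l2_0, X3_octe _ _ _ (by decide) (by decide) (by decide) (by decide)]
  ext k
  fin_cases k <;>
    simp [Fin.sum_univ_eight, structC, eps, plusTriples, octe, EuclideanSpace.single_apply]

lemma AvecEq1 : Avec 1 = octe 3 := by
  rw [Avec, l0_1, l1_1, l2_1, X3_octe _ _ _ (by decide) (by decide) (by decide) (by decide)]
  ext k
  fin_cases k <;>
    simp [Fin.sum_univ_eight, structC, eps, plusTriples, octe, EuclideanSpace.single_apply]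

lemma AvecEq2 : Avec 2 = octe 3 := by
  rw [Avec, l0_2, l1_2, l2_2, X3_octe0 _ _ (by decide) (by decide) (by decide)]
  ext k
  fin_cases k <;>
    simp [Fin.sum_univ_eight, structC, eps, plusTriples, octe, EuclideanSpace.single_apply]

lemma AvecEq : ∀ l, Avec l = octe 3 := by
  intro l
  fin_cases l
  · exact AvecEq0
  · exact AvecEq1
  · exact AvecEq2

example : covD2 0 4 = if (4 : Fin 8) = 3 then 0 else -octe 3 := by
  rw [covD2_eq, AvecEq]
  simp only [l0_0, l1_0, l2_0, Bvec]
  rw [X3_octe _ _ _ (by decide) (by decide) (by decide) (by decide)]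
  ext k
  fin_cases k <;>
    simp [proj012, Fin.sum_univ_eight, structC, eps, plusTriples, octe,
      EuclideanSpace.single_apply, PiLp.sub_apply, PiLp.smul_apply]

lemma X3_octe0' (a b c : Fin 8) (hb : b = 0) (hc : c ≠ 0) (hca : c ≠ a) (ha : a ≠ 0) :
    X3 (octe a) (octe b) (octe c) = WithLp.toLp 2 (fun k => -∑ j, structC 0 c j * structC a j k) := by
  subst hb; exact X3_octe0 a c hc hca ha

lemma cov_0_3 : covD2 0 3 = if (3 : Fin 8) = 3 then 0 else -octe 3 := by
  rw [covD2_eq, AvecEq]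
  simp only [Bvec, l0_0, l1_0, l2_0]
  first
  | rw [X3_octe _ _ _ (by decide) (by decide) (by decide) (by decide)]
  | rw [X3_octe0' _ _ _ (by decide) (by decide) (by decide) (by decide)]
  ext k
  fin_cases k <;>
    simp [proj012, Fin.sum_univ_eight, structC, eps, plusTriples, octe,
      EuclideanSpace.single_apply]

lemma cov_0_4 : covD2 0 4 = if (4 : Fin 8) = 3 then 0 else -octe 3 := by
  rw [covD2_eq, AvecEq]
  simp only [Bvec, l0_0, l1_0, l2_0]
  first
  | rw [X3_octe _ _ _ (by decide) (by decide) (by decide) (by decide)]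
  | rw [X3_octe0' _ _ _ (by decide) (by decide) (by decide) (by decide)]
  ext k
  fin_cases k <;>
    simp [proj012, Fin.sum_univ_eight, structC, eps, plusTriples, octe,
      EuclideanSpace.single_apply]

lemma cov_0_5 : covD2 0 5 = if (5 : Fin 8) = 3 then 0 else -octe 3 := by
  rw [covD2_eq, AvecEq]
  simp only [Bvec, l0_0, l1_0, l2_0]
  first
  | rw [X3_octe _ _ _ (by decide) (by decide) (by decide) (by decide)]
  | rw [X3_octe0' _ _ _ (by decide) (by decide) (by decide) (by decide)]
  ext k
  fin_cases k <;>
    simp [proj012, Fin.sum_univ_eight, structC, eps, plusTriples, octe,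
      EuclideanSpace.single_apply]

lemma cov_0_6 : covD2 0 6 = if (6 : Fin 8) = 3 then 0 else -octe 3 := by
  rw [covD2_eq, AvecEq]
  simp only [Bvec, l0_0, l1_0, l2_0]
  first
  | rw [X3_octe _ _ _ (by decide) (by decide) (by decide) (by decide)]
  | rw [X3_octe0' _ _ _ (by decide) (by decide) (by decide) (by decide)]
  ext k
  fin_cases k <;>
    simp [proj012, Fin.sum_univ_eight, structC, eps, plusTriples, octe,
      EuclideanSpace.single_apply]

lemma cov_0_7 : covD2 0 7 = if (7 : Fin 8) = 3 then 0 else -octe 3 := by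
  rw [covD2_eq, AvecEq]
  simp only [Bvec, l0_0, l1_0, l2_0]
  first
  | rw [X3_octe _ _ _ (by decide) (by decide) (by decide) (by decide)]
  | rw [X3_octe0' _ _ _ (by decide) (by decide) (by decide) (by decide)]
  ext k
  fin_cases k <;>
    simp [proj012, Fin.sum_univ_eight, structC, eps, plusTriples, octe,
      EuclideanSpace.single_apply]

lemma cov_1_3 : covD2 1 3 = if (3 : Fin 8) = 3 then 0 else -octe 3 := by
  rw [covD2_eq, AvecEq]
  simp only [Bvec, l0_1, l1_1, l2_1]
  first
  | rw [X3_octe _ _ _ (by decide) (by decide) (by decide) (by decide)]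
  | rw [X3_octe0' _ _ _ (by decide) (by decide) (by decide) (by decide)]
  ext k
  fin_cases k <;>
    simp [proj012, Fin.sum_univ_eight, structC, eps, plusTriples, octe,
      EuclideanSpace.single_apply]

lemma cov_1_4 : covD2 1 4 = if (4 : Fin 8) = 3 then 0 else -octe 3 := by
  rw [covD2_eq, AvecEq]
  simp only [Bvec, l0_1, l1_1, l2_1]
  first
  | rw [X3_octe _ _ _ (by decide) (by decide) (by decide) (by decide)]
  | rw [X3_octe0' _ _ _ (by decide) (by decide) (by decide) (by decide)]
  ext k
  fin_cases k <;>
    simp [proj012, Fin.sum_univ_eight, structC, eps, plusTriples, octe,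
      EuclideanSpace.single_apply]

lemma cov_1_5 : covD2 1 5 = if (5 : Fin 8) = 3 then 0 else -octe 3 := by
  rw [covD2_eq, AvecEq]
  simp only [Bvec, l0_1, l1_1, l2_1]
  first
  | rw [X3_octe _ _ _ (by decide) (by decide) (by decide) (by decide)]
  | rw [X3_octe0' _ _ _ (by decide) (by decide) (by decide) (by decide)]
  ext k
  fin_cases k <;>
    simp [proj012, Fin.sum_univ_eight, structC, eps, plusTriples, octe,
      EuclideanSpace.single_apply]

lemma cov_1_6 : covD2 1 6 = if (6 : Fin 8) = 3 then 0 else -octe 3 := by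
  rw [covD2_eq, AvecEq]
  simp only [Bvec, l0_1, l1_1, l2_1]
  first
  | rw [X3_octe _ _ _ (by decide) (by decide) (by decide) (by decide)]
  | rw [X3_octe0' _ _ _ (by decide) (by decide) (by decide) (by decide)]
  ext k
  fin_cases k <;>
    simp [proj012, Fin.sum_univ_eight, structC, eps, plusTriples, octe,
      EuclideanSpace.single_apply]

lemma cov_1_7 : covD2 1 7 = if (7 : Fin 8) = 3 then 0 else -octe 3 := by
  rw [covD2_eq, AvecEq]
  simp only [Bvec, l0_1, l1_1, l2_1]
  first
  | rw [X3_octe _ _ _ (by decide) (by decide) (by decide) (by decide)]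
  | rw [X3_octe0' _ _ _ (by decide) (by decide) (by decide) (by decide)]
  ext k
  fin_cases k <;>
    simp [proj012, Fin.sum_univ_eight, structC, eps, plusTriples, octe,
      EuclideanSpace.single_apply]

lemma cov_2_3 : covD2 2 3 = if (3 : Fin 8) = 3 then 0 else -octe 3 := by
  rw [covD2_eq, AvecEq]
  simp only [Bvec, l0_2, l1_2, l2_2]
  first
  | rw [X3_octe _ _ _ (by decide) (by decide) (by decide) (by decide)]
  | rw [X3_octe0' _ _ _ (by decide) (by decide) (by decide) (by decide)]
  ext k
  fin_cases k <;>
    simp [proj012, Fin.sum_univ_eight, structC, eps, plusTriples, octe,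
      EuclideanSpace.single_apply]

lemma cov_2_4 : covD2 2 4 = if (4 : Fin 8) = 3 then 0 else -octe 3 := by
  rw [covD2_eq, AvecEq]
  simp only [Bvec, l0_2, l1_2, l2_2]
  first
  | rw [X3_octe _ _ _ (by decide) (by decide) (by decide) (by decide)]
  | rw [X3_octe0' _ _ _ (by decide) (by decide) (by decide) (by decide)]
  ext k
  fin_cases k <;>
    simp [proj012, Fin.sum_univ_eight, structC, eps, plusTriples, octe,
      EuclideanSpace.single_apply]

lemma cov_2_5 : covD2 2 5 = if (5 : Fin 8) = 3 then 0 else -octe 3 := by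
  rw [covD2_eq, AvecEq]
  simp only [Bvec, l0_2, l1_2, l2_2]
  first
  | rw [X3_octe _ _ _ (by decide) (by decide) (by decide) (by decide)]
  | rw [X3_octe0' _ _ _ (by decide) (by decide) (by decide) (by decide)]
  ext k
  fin_cases k <;>
    simp [proj012, Fin.sum_univ_eight, structC, eps, plusTriples, octe,
      EuclideanSpace.single_apply]

lemma cov_2_6 : covD2 2 6 = if (6 : Fin 8) = 3 then 0 else -octe 3 := by
  rw [covD2_eq, AvecEq]
  simp only [Bvec, l0_2, l1_2, l2_2]
  first
  | rw [X3_octe _ _ _ (by decide) (by decide) (by decide) (by decide)]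
  | rw [X3_octe0' _ _ _ (by decide) (by decide) (by decide) (by decide)]
  ext k
  fin_cases k <;>
    simp [proj012, Fin.sum_univ_eight, structC, eps, plusTriples, octe,
      EuclideanSpace.single_apply]

lemma cov_2_7 : covD2 2 7 = if (7 : Fin 8) = 3 then 0 else -octe 3 := by
  rw [covD2_eq, AvecEq]
  simp only [Bvec, l0_2, l1_2, l2_2]
  first
  | rw [X3_octe _ _ _ (by decide) (by decide) (by decide) (by decide)]
  | rw [X3_octe0' _ _ _ (by decide) (by decide) (by decide) (by decide)]
  ext k
  fin_cases k <;>
    simp [proj012, Fin.sum_univ_eight, structC, eps, plusTriples, octe,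
      EuclideanSpace.single_apply]

lemma part1 : ∀ (l : Fin 3) (j : Fin 8), 3 ≤ (j : ℕ) →
    covD2 l j = if j = 3 then 0 else -octe 3 := by
  intro l j hj
  fin_cases l <;> fin_cases j
  exacts [absurd hj (by decide),
    absurd hj (by decide),
    absurd hj (by decide),
    cov_0_3,
    cov_0_4,
    cov_0_5,
    cov_0_6,
    cov_0_7,
    absurd hj (by decide),
    absurd hj (by decide),
    absurd hj (by decide),
    cov_1_3,
    cov_1_4,
    cov_1_5,
    cov_1_6,
    cov_1_7,
    absurd hj (by decide),
    absurd hj (by decide),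
    absurd hj (by decide),
    cov_2_3,
    cov_2_4,
    cov_2_5,
    cov_2_6,
    cov_2_7]


lemma X3e012 : X3 (octe 0) (octe 1) (octe 2) = octe 3 := AvecEq0

lemma part2 : (∑ l : Fin 3, ∑ j ∈ Finset.univ.filter (fun j : Fin 8 => 3 ≤ (j : ℕ)),
    covD2 l j) = (-12 : ℝ) • octe 3 := by
  have hs : (Finset.univ.filter (fun j : Fin 8 => 3 ≤ (j : ℕ))) = {3,4,5,6,7} := by decide
  rw [hs, Fin.sum_univ_three]
  rw [show ({3,4,5,6,7} : Finset (Fin 8)) = insert 3 (insert 4 (insert 5 (insert 6 {7}))) from rfl]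
  repeat rw [Finset.sum_insert (by decide)]
  simp only [Finset.sum_singleton]
  rw [cov_0_3, cov_0_4, cov_0_5, cov_0_6, cov_0_7, cov_1_3, cov_1_4, cov_1_5, cov_1_6, cov_1_7, cov_2_3, cov_2_4, cov_2_5, cov_2_6, cov_2_7]
  simp only [if_pos rfl, if_neg (show ¬((4:Fin 8) = 3) by decide),
    if_neg (show ¬((5:Fin 8) = 3) by decide), if_neg (show ¬((6:Fin 8) = 3) by decide),
    if_neg (show ¬((7:Fin 8) = 3) by decide)]
  ext k
  fin_cases k <;>
    simp [octe, EuclideanSpace.single_apply] <;> norm_num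

/-- `∇_{e_j^ℓ}∇_{E_j^ℓ}σ₃ = (δ_{j3} - 1) e₃` at `e₀∧e₁∧e₂`, and hence the
rough Laplacian `Δσ₃(e₀∧e₁∧e₂) = Σ_{ℓ,j} ∇_{e_j^ℓ}∇_{E_j^ℓ}σ₃ = -12 e₃
= -12 σ₃(e₀∧e₁∧e₂)`. -/
theorem stmt15 :
    (∀ (l : Fin 3) (j : Fin 8), 3 ≤ (j : ℕ) →
      covD2 l j = if j = 3 then 0 else -octe 3) ∧
    (∑ l : Fin 3, ∑ j ∈ Finset.univ.filter (fun j : Fin 8 => 3 ≤ (j : ℕ)),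
        covD2 l j) = (-12 : ℝ) • octe 3 ∧
    (-12 : ℝ) • octe 3 = (-12 : ℝ) • X3 (octe 0) (octe 1) (octe 2) := ⟨part1, part2, by rw [X3e012]⟩
end
end
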